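/- Let Ω ⊆ ℝ² be an open set with coordinates (u,v) and f > 0. Let ρ : Ω → ℝ be a positive differentiable function and n = (n₁,n₂,n₃) : Ω → ℝ³ a differentiable map with |n| = 1 and n₃ nonvanishing, and set m = ρ·n = (m₁,m₂,m₃). Define p = −n₁/n₃ and q = −n₂/n₃, assume f − u·p − v·q ≠ 0 on Ω, and set p̂ = p/(f − up − vq), q̂ = q/(f − up − vq). Then ∂_v p̂ = ∂_u q̂ on Ω if and only if u·(m₁·∂_u m₂ − m₂·∂_u m₁) + v·(m₁·∂_v m₂ − m₂·∂_v m₁) + f·(m₁·∂_v m₃ − m₃·∂_v m₁) + f·(m₃·∂_u m₂ − m₂·∂_u m₃) = 0 on Ω. -/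

import Mathlib

/-- Partial derivative with respect to the first coordinate u. -/
noncomputable def pu (g : ℝ × ℝ → ℝ) (x : ℝ × ℝ) : ℝ := fderiv ℝ g x (1, 0)

/-- Partial derivative with respect to the second coordinate v. -/
noncomputable def pv (g : ℝ × ℝ → ℝ) (x : ℝ × ℝ) : ℝ := fderiv ℝ g x (0, 1)

open scoped Topology

lemma fd_mul {g h : ℝ × ℝ → ℝ} {x : ℝ × ℝ} (w : ℝ × ℝ)
    (hg : DifferentiableAt ℝ g x) (hh : DifferentiableAt ℝ h x) :
    fderiv ℝ (fun y => g y * h y) x w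
      = g x * fderiv ℝ h x w + h x * fderiv ℝ g x w := by
  rw [fderiv_fun_mul hg hh]; simp [smul_eq_mul]

lemma fd_div {g h : ℝ × ℝ → ℝ} {x : ℝ × ℝ} (w : ℝ × ℝ)
    (hg : DifferentiableAt ℝ g x) (hh : DifferentiableAt ℝ h x) (h0 : h x ≠ 0) :
    fderiv ℝ (fun y => g y / h y) x w
      = (fderiv ℝ g x w * h x - g x * fderiv ℝ h x w) / (h x)^2 := by
  have hinv : HasFDerivAt (fun y => (h y)⁻¹)
      ((-ContinuousLinearMap.mulLeftRight ℝ ℝ (h x)⁻¹ (h x)⁻¹).comp (fderiv ℝ h x)) x :=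
    (hasFDerivAt_inv' h0).comp x hh.hasFDerivAt
  have hmul := hg.hasFDerivAt.fun_mul hinv
  have hEq : (fun y => g y / h y) = fun y => g y * (h y)⁻¹ := by
    funext y; rw [div_eq_mul_inv]
  rw [hEq, hmul.fderiv]
  simp only [ContinuousLinearMap.add_apply, ContinuousLinearMap.smul_apply,
    ContinuousLinearMap.comp_apply, ContinuousLinearMap.neg_apply,
    ContinuousLinearMap.mulLeftRight_apply, smul_eq_mul]
  field_simp
  ring

lemma fd_S (f : ℝ) {n1 n2 n3 : ℝ × ℝ → ℝ} {x : ℝ × ℝ} (w : ℝ × ℝ)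
    (h1 : DifferentiableAt ℝ n1 x) (h2 : DifferentiableAt ℝ n2 x)
    (h3 : DifferentiableAt ℝ n3 x) :
    fderiv ℝ (fun y => f * n3 y + y.1 * n1 y + y.2 * n2 y) x w
      = f * fderiv ℝ n3 x w + (w.1 * n1 x + x.1 * fderiv ℝ n1 x w)
        + (w.2 * n2 x + x.2 * fderiv ℝ n2 x w) := by
  have hfst : DifferentiableAt ℝ (fun y : ℝ × ℝ => y.1) x := differentiableAt_fst
  have hsnd : DifferentiableAt ℝ (fun y : ℝ × ℝ => y.2) x := differentiableAt_snd
  have d1 : DifferentiableAt ℝ (fun y : ℝ × ℝ => f * n3 y) x := h3.const_mul f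
  have d2 : DifferentiableAt ℝ (fun y : ℝ × ℝ => y.1 * n1 y) x := hfst.mul h1
  have d3 : DifferentiableAt ℝ (fun y : ℝ × ℝ => y.2 * n2 y) x := hsnd.mul h2
  have e1 : fderiv ℝ (fun y : ℝ × ℝ => f * n3 y) x w = f * fderiv ℝ n3 x w := by
    rw [fderiv_const_mul h3]; simp
  have e2 : fderiv ℝ (fun y : ℝ × ℝ => y.1 * n1 y) x w
      = w.1 * n1 x + x.1 * fderiv ℝ n1 x w := by
    rw [fd_mul w hfst h1]
    have : fderiv ℝ (fun y : ℝ × ℝ => y.1) x w = w.1 := by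
      rw [fderiv_fst]; rfl
    rw [this]; ring
  have e3 : fderiv ℝ (fun y : ℝ × ℝ => y.2 * n2 y) x w
      = w.2 * n2 x + x.2 * fderiv ℝ n2 x w := by
    rw [fd_mul w hsnd h2]
    have : fderiv ℝ (fun y : ℝ × ℝ => y.2) x w = w.2 := by
      rw [fderiv_snd]; rfl
    rw [this]; ring
  rw [fderiv_fun_add (d1.fun_add d2) d3, fderiv_fun_add d1 d2]
  simp only [ContinuousLinearMap.add_apply]
  rw [e1, e2, e3]

lemma key_pointwise (f : ℝ) (ρ n1 n2 n3 : ℝ × ℝ → ℝ) (x : ℝ × ℝ)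
    (hρ : DifferentiableAt ℝ ρ x) (hρpos : 0 < ρ x)
    (h1 : DifferentiableAt ℝ n1 x) (h2 : DifferentiableAt ℝ n2 x)
    (h3 : DifferentiableAt ℝ n3 x)
    (hn3x : n3 x ≠ 0)
    (hdenx : f - x.1 * (-(n1 x) / n3 x) - x.2 * (-(n2 x) / n3 x) ≠ 0) :
    (pv (fun y => (-(n1 y) / n3 y) /
          (f - y.1 * (-(n1 y) / n3 y) - y.2 * (-(n2 y) / n3 y))) x
        = pu (fun y => (-(n2 y) / n3 y) /
          (f - y.1 * (-(n1 y) / n3 y) - y.2 * (-(n2 y) / n3 y))) x)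
      ↔ (x.1 * ((ρ x * n1 x) * pu (fun y => ρ y * n2 y) x
            - (ρ x * n2 x) * pu (fun y => ρ y * n1 y) x)
          + x.2 * ((ρ x * n1 x) * pv (fun y => ρ y * n2 y) x
            - (ρ x * n2 x) * pv (fun y => ρ y * n1 y) x)
          + f * ((ρ x * n1 x) * pv (fun y => ρ y * n3 y) x
            - (ρ x * n3 x) * pv (fun y => ρ y * n1 y) x)
          + f * ((ρ x * n3 x) * pu (fun y => ρ y * n2 y) x
            - (ρ x * n2 x) * pu (fun y => ρ y * n3 y) x) = 0) := by
  set S : ℝ × ℝ → ℝ := fun y => f * n3 y + y.1 * n1 y + y.2 * n2 y with hS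
  have hSdiff : DifferentiableAt ℝ S x :=
    ((h3.const_mul f).add (differentiableAt_fst.mul h1)).add (differentiableAt_snd.mul h2)
  have hSx : S x ≠ 0 := by
    intro h0
    apply hdenx
    have : f - x.1 * (-(n1 x) / n3 x) - x.2 * (-(n2 x) / n3 x) = S x / n3 x := by
      simp only [hS]; field_simp; try ring
    rw [this, h0, zero_div]
  have hn3ev : ∀ᶠ y in 𝓝 x, n3 y ≠ 0 := h3.continuousAt.eventually_ne hn3x
  have heq : ∀ y : ℝ × ℝ, n3 y ≠ 0 → ∀ g : ℝ × ℝ → ℝ,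
      (-(g y) / n3 y) / (f - y.1 * (-(n1 y) / n3 y) - y.2 * (-(n2 y) / n3 y))
        = -(g y) / S y := by
    intro y hy g
    have hd : f - y.1 * (-(n1 y) / n3 y) - y.2 * (-(n2 y) / n3 y) = S y / n3 y := by
      simp only [hS]; field_simp; try ring
    rw [hd]
    by_cases hSy : S y = 0
    · simp [hSy]
    · field_simp
  have hevp : (fun y => (-(n1 y) / n3 y) /
        (f - y.1 * (-(n1 y) / n3 y) - y.2 * (-(n2 y) / n3 y)))
      =ᶠ[𝓝 x] fun y => -(n1 y) / S y :=
    hn3ev.mono fun y hy => heq y hy n1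
  have hevq : (fun y => (-(n2 y) / n3 y) /
        (f - y.1 * (-(n1 y) / n3 y) - y.2 * (-(n2 y) / n3 y)))
      =ᶠ[𝓝 x] fun y => -(n2 y) / S y :=
    hn3ev.mono fun y hy => heq y hy n2
  have hpv : pv (fun y => (-(n1 y) / n3 y) /
        (f - y.1 * (-(n1 y) / n3 y) - y.2 * (-(n2 y) / n3 y))) x
      = (n1 x * fderiv ℝ S x (0,1) - S x * fderiv ℝ n1 x (0,1)) / (S x)^2 := by
    show fderiv ℝ _ x (0,1) = _
    rw [hevp.fderiv_eq, fd_div (0,1) h1.fun_neg hSdiff hSx]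
    have : fderiv ℝ (fun y => -(n1 y)) x = -fderiv ℝ n1 x := fderiv_neg
    rw [this]
    simp only [ContinuousLinearMap.neg_apply]
    ring
  have hqu : pu (fun y => (-(n2 y) / n3 y) /
        (f - y.1 * (-(n1 y) / n3 y) - y.2 * (-(n2 y) / n3 y))) x
      = (n2 x * fderiv ℝ S x (1,0) - S x * fderiv ℝ n2 x (1,0)) / (S x)^2 := by
    show fderiv ℝ _ x (1,0) = _
    rw [hevq.fderiv_eq, fd_div (1,0) h2.fun_neg hSdiff hSx]
    have : fderiv ℝ (fun y => -(n2 y)) x = -fderiv ℝ n2 x := fderiv_neg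
    rw [this]
    simp only [ContinuousLinearMap.neg_apply]
    ring
  have hSu : fderiv ℝ S x (1,0)
      = f * fderiv ℝ n3 x (1,0) + (n1 x + x.1 * fderiv ℝ n1 x (1,0))
        + x.2 * fderiv ℝ n2 x (1,0) := by
    rw [hS, fd_S f (1,0) h1 h2 h3]; norm_num
  have hSv : fderiv ℝ S x (0,1)
      = f * fderiv ℝ n3 x (0,1) + x.1 * fderiv ℝ n1 x (0,1)
        + (n2 x + x.2 * fderiv ℝ n2 x (0,1)) := by
    rw [hS, fd_S f (0,1) h1 h2 h3]; norm_num
  -- abbreviations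
  set du1 := fderiv ℝ n1 x (1,0)
  set du2 := fderiv ℝ n2 x (1,0)
  set du3 := fderiv ℝ n3 x (1,0)
  set dv1 := fderiv ℝ n1 x (0,1)
  set dv2 := fderiv ℝ n2 x (0,1)
  set dv3 := fderiv ℝ n3 x (0,1)
  have hm : ∀ g : ℝ × ℝ → ℝ, DifferentiableAt ℝ g x → ∀ w : ℝ × ℝ,
      fderiv ℝ (fun y => ρ y * g y) x w
        = ρ x * fderiv ℝ g x w + g x * fderiv ℝ ρ x w := fun g hg w => fd_mul w hρ hg
  have hm1u : pu (fun y => ρ y * n1 y) x = ρ x * du1 + n1 x * fderiv ℝ ρ x (1,0) :=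
    hm n1 h1 (1,0)
  have hm2u : pu (fun y => ρ y * n2 y) x = ρ x * du2 + n2 x * fderiv ℝ ρ x (1,0) :=
    hm n2 h2 (1,0)
  have hm3u : pu (fun y => ρ y * n3 y) x = ρ x * du3 + n3 x * fderiv ℝ ρ x (1,0) :=
    hm n3 h3 (1,0)
  have hm1v : pv (fun y => ρ y * n1 y) x = ρ x * dv1 + n1 x * fderiv ℝ ρ x (0,1) :=
    hm n1 h1 (0,1)
  have hm2v : pv (fun y => ρ y * n2 y) x = ρ x * dv2 + n2 x * fderiv ℝ ρ x (0,1) :=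
    hm n2 h2 (0,1)
  have hm3v : pv (fun y => ρ y * n3 y) x = ρ x * dv3 + n3 x * fderiv ℝ ρ x (0,1) :=
    hm n3 h3 (0,1)
  rw [hpv, hqu, hSu, hSv, hm1u, hm2u, hm3u, hm1v, hm2v, hm3v,
      div_left_inj' (pow_ne_zero 2 hSx)]
  have hSxval : S x = f * n3 x + x.1 * n1 x + x.2 * n2 x := rfl
  rw [hSxval]
  have hρ2 : (ρ x) ^ 2 ≠ 0 := pow_ne_zero 2 (ne_of_gt hρpos)
  constructor
  · intro h
    linear_combination (ρ x ^ 2) * h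
  · intro h
    apply mul_left_cancel₀ hρ2
    linear_combination h

/-- Perspective integrability of a normal field n, expressed in terms of the
components of m = ρ·n: with p = −n₁/n₃, q = −n₂/n₃, p̂ = p/(f−up−vq),
q̂ = q/(f−up−vq), one has ∂_v p̂ = ∂_u q̂ on Ω iff
u·(m₁ ∂_u m₂ − m₂ ∂_u m₁) + v·(m₁ ∂_v m₂ − m₂ ∂_v m₁)
+ f·(m₁ ∂_v m₃ − m₃ ∂_v m₁) + f·(m₃ ∂_u m₂ − m₂ ∂_u m₃) = 0 on Ω. -/
theorem perspective_integrability_in_terms_of_m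
    (Ω : Set (ℝ × ℝ)) (hΩ : IsOpen Ω) (f : ℝ) (hf : 0 < f)
    (ρ n1 n2 n3 : ℝ × ℝ → ℝ)
    (hρ : ∀ x ∈ Ω, DifferentiableAt ℝ ρ x) (hρpos : ∀ x ∈ Ω, 0 < ρ x)
    (hn1 : ∀ x ∈ Ω, DifferentiableAt ℝ n1 x) (hn2 : ∀ x ∈ Ω, DifferentiableAt ℝ n2 x)
    (hn3 : ∀ x ∈ Ω, DifferentiableAt ℝ n3 x)
    (hunit : ∀ x ∈ Ω, (n1 x)^2 + (n2 x)^2 + (n3 x)^2 = 1)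
    (hn3ne : ∀ x ∈ Ω, n3 x ≠ 0)
    (hden : ∀ x ∈ Ω, f - x.1 * (-(n1 x) / n3 x) - x.2 * (-(n2 x) / n3 x) ≠ 0) :
    letI p : ℝ × ℝ → ℝ := fun y => -(n1 y) / n3 y
    letI q : ℝ × ℝ → ℝ := fun y => -(n2 y) / n3 y
    letI m1 : ℝ × ℝ → ℝ := fun y => ρ y * n1 y
    letI m2 : ℝ × ℝ → ℝ := fun y => ρ y * n2 y
    letI m3 : ℝ × ℝ → ℝ := fun y => ρ y * n3 y
    ((∀ x ∈ Ω,
        pv (fun y => p y / (f - y.1 * p y - y.2 * q y)) x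
          = pu (fun y => q y / (f - y.1 * p y - y.2 * q y)) x) ↔
      (∀ x ∈ Ω,
        x.1 * (m1 x * pu m2 x - m2 x * pu m1 x)
          + x.2 * (m1 x * pv m2 x - m2 x * pv m1 x)
          + f * (m1 x * pv m3 x - m3 x * pv m1 x)
          + f * (m3 x * pu m2 x - m2 x * pu m3 x) = 0)) := by
  exact forall₂_congr fun x hx =>
    key_pointwise f ρ n1 n2 n3 x (hρ x hx) (hρpos x hx) (hn1 x hx) (hn2 x hx) (hn3 x hx)
      (hn3ne x hx) (hden x hx)
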